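/- For a subcritical Galton–Watson process (Z_n) with offspring mean μ ∈ (0,1) and E[ξ³] < ∞, and for l ≥ m ≥ n, we have E[Z_n Z_m Z_l] ≤ C μ^l for some constant C independent of n, m, l. -/

import Mathlib

open MeasureTheory ProbabilityTheory Filter

open scoped ENNReal NNReal

set_option linter.unusedSectionVars false

namespace GW6

variable {Ω : Type} [MeasureSpace Ω] [IsProbabilityMeasure (ℙ : Measure Ω)]
variable (ξ : ℕ × ℕ → Ω → ℕ)

/-- σ-algebra generated by the variables with index in `S`. -/
def GS (S : Set (ℕ × ℕ)) : MeasurableSpace Ω :=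
  ⨆ q ∈ S, MeasurableSpace.comap (ξ q) ⊤

variable {ξ}

lemma GS_le (hmeas : ∀ q, Measurable (ξ q)) (S : Set (ℕ × ℕ)) :
    GS ξ S ≤ (inferInstance : MeasurableSpace Ω) := by
  refine iSup₂_le fun q _ => ?_
  exact MeasurableSpace.comap_le_iff_le_map.2 fun s _ => (hmeas q) (by trivial)

lemma GS_mono {S T : Set (ℕ × ℕ)} (h : S ⊆ T) : GS ξ S ≤ GS ξ T := by
  refine iSup₂_le fun q hq => ?_
  exact le_iSup₂ (f := fun q (_ : q ∈ T) => MeasurableSpace.comap (ξ q) ⊤) q (h hq)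

lemma meas_GS_self {S : Set (ℕ × ℕ)} {q : ℕ × ℕ} (hq : q ∈ S) :
    Measurable[GS ξ S] (ξ q) := by
  intro s _
  have h1 : MeasurableSpace.comap (ξ q) ⊤ ≤ GS ξ S :=
    le_iSup₂ (f := fun q (_ : q ∈ S) => MeasurableSpace.comap (ξ q) ⊤) q hq
  exact h1 _ ⟨s, trivial, rfl⟩

lemma indep_GS (hmeas : ∀ q, Measurable (ξ q))
    (hindep : iIndepFun ξ ℙ)
    {S : Set (ℕ × ℕ)} {q : ℕ × ℕ} (hq : q ∉ S) :
    Indep (GS ξ S) (MeasurableSpace.comap (ξ q) ⊤) ℙ := by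
  have h := indep_biSup_compl (fun p => (hmeas p).comap_le) hindep S
  refine indep_of_indep_of_le_right h ?_
  exact le_iSup₂ (f := fun p (_ : p ∈ Sᶜ) => MeasurableSpace.comap (ξ p) ⊤) q hq

/-- composition measurability for countably-valued index -/
lemma meas_nat_comp {M : MeasurableSpace Ω} {f : Ω → ℕ} (hf : Measurable[M] f)
    {g : ℕ → Ω → ℕ} (hg : ∀ k, Measurable[M] (g k)) :
    Measurable[M] fun ω => g (f ω) ω := by
  have h1 : Measurable[M.prod ⊤] fun p : Ω × ℕ => g p.2 p.1 :=
    measurable_from_prod_countable_left fun k => hg k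
  exact h1.comp (measurable_id.prodMk hf)

variable (Z : ℕ → Ω → ℕ)

/-- indices strictly below generation L -/
def past (L : ℕ) : Set (ℕ × ℕ) := {q | q.1 < L}

variable {Z}

lemma Z_meas_GS (hZ0 : ∀ ω, Z 0 ω = 1)
    (hZrec : ∀ n ω, Z (n + 1) ω = ∑ j ∈ Finset.range (Z n ω), ξ (n, j) ω)
    (L : ℕ) : ∀ k, k ≤ L → Measurable[GS ξ (past L)] (Z k) := by
  intro k
  induction k with
  | zero =>
    intro _
    have : Z 0 = fun _ => 1 := funext hZ0
    rw [this]; exact measurable_const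
  | succ k ih =>
    intro hk
    have hkL : k ≤ L := Nat.le_of_succ_le hk
    have : Z (k+1) = fun ω => (fun N ω' => ∑ j ∈ Finset.range N, ξ (k, j) ω') (Z k ω) ω :=
      funext fun ω => hZrec k ω
    rw [this]
    refine meas_nat_comp (ih hkL) (g := fun N ω' => ∑ j ∈ Finset.range N, ξ (k, j) ω') fun N => ?_
    refine Finset.measurable_sum _ fun j _ => ?_
    exact meas_GS_self (show (k, j) ∈ past L from Nat.lt_of_succ_le hk)

lemma Z_meas (hmeas : ∀ q, Measurable (ξ q)) (hZ0 : ∀ ω, Z 0 ω = 1)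
    (hZrec : ∀ n ω, Z (n + 1) ω = ∑ j ∈ Finset.range (Z n ω), ξ (n, j) ω)
    (k : ℕ) : Measurable (Z k) :=
  (Z_meas_GS hZ0 hZrec k k le_rfl).mono (GS_le hmeas _) le_rfl

/-- the key factorization lemma -/
lemma fact_lemma (hmeas : ∀ q, Measurable (ξ q))
    (hindep : iIndepFun ξ ℙ)
    (hident : ∀ q, Measure.map (ξ q) ℙ = Measure.map (ξ (0, 0)) ℙ)
    {S : Set (ℕ × ℕ)} {q : ℕ × ℕ} (hq : q ∉ S)
    {h : Ω → ℝ≥0∞} (hh : Measurable[GS ξ S] h) (φ : ℕ → ℝ≥0∞) :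
    ∫⁻ ω, h ω * φ (ξ q ω) ∂ℙ = (∫⁻ ω, h ω ∂ℙ) * ∫⁻ ω, φ (ξ (0, 0) ω) ∂ℙ := by
  have hφ : Measurable φ := measurable_from_top
  have hmg : Measurable[MeasurableSpace.comap (ξ q) ⊤] fun ω => φ (ξ q ω) :=
    hφ.comp (Measurable.of_comap_le le_rfl)
  have key := lintegral_mul_eq_lintegral_mul_lintegral_of_independent_measurableSpace
    (GS_le hmeas S) ((hmeas q).comap_le) (indep_GS hmeas hindep hq) hh hmg
  rw [key]
  congr 1
  rw [← lintegral_map hφ (hmeas q), hident q, lintegral_map hφ (hmeas (0,0))]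




/-- indicator that individual j is alive in generation L -/
noncomputable def ind (Z : ℕ → Ω → ℕ) (L j : ℕ) (ω : Ω) : ℝ≥0∞ := if j < Z L ω then 1 else 0

lemma tsum_ind_mul (N : ℕ) (g : ℕ → ℝ≥0∞) :
    ∑' j, (if j < N then (1 : ℝ≥0∞) else 0) * g j = ∑ j ∈ Finset.range N, g j := by
  rw [tsum_eq_sum (s := Finset.range N) (fun j hj => by
    rw [if_neg (by simpa using hj), zero_mul])]
  exact Finset.sum_congr rfl fun j hj => by rw [if_pos (by simpa using hj), one_mul]

lemma X_succ (hZrec : ∀ n ω, Z (n + 1) ω = ∑ j ∈ Finset.range (Z n ω), ξ (n, j) ω)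
    (L : ℕ) (ω : Ω) :
    (Z (L + 1) ω : ℝ≥0∞) = ∑' j, ind Z L j ω * (ξ (L, j) ω : ℝ≥0∞) := by
  rw [hZrec L ω, Nat.cast_sum, ← tsum_ind_mul (Z L ω) (fun j => (ξ (L, j) ω : ℝ≥0∞))]
  rfl

lemma X_eq (L : ℕ) (ω : Ω) : (Z L ω : ℝ≥0∞) = ∑' j, ind Z L j ω := by
  have := tsum_ind_mul (N := Z L ω) (fun _ => (1 : ℝ≥0∞))
  simp only [mul_one] at this
  simp only [ind]
  rw [this, Finset.sum_const, Finset.card_range, nsmul_eq_mul, mul_one]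


/-- r-th moment of the offspring distribution, in ℝ≥0∞ -/
noncomputable def e (ξ : ℕ × ℕ → Ω → ℕ) (r : ℕ) : ℝ≥0∞ :=
  ∫⁻ ω, (ξ (0, 0) ω : ℝ≥0∞) ^ r ∂ℙ

section Steps

variable (hmeas : ∀ q, Measurable (ξ q))
  (hindep : iIndepFun ξ ℙ)
  (hident : ∀ q, Measure.map (ξ q) ℙ = Measure.map (ξ (0, 0)) ℙ)
  (hZ0 : ∀ ω, Z 0 ω = 1)
  (hZrec : ∀ n ω, Z (n + 1) ω = ∑ j ∈ Finset.range (Z n ω), ξ (n, j) ω)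

include hmeas hindep hident hZ0 hZrec

omit hindep hident in
lemma ind_meas (L j : ℕ) : Measurable[GS ξ (past L)] (ind Z L j) := by
  have hZm := Z_meas_GS hZ0 hZrec L L le_rfl
  exact Measurable.ite (hZm (show MeasurableSet {x | j < x} from trivial))
    measurable_const measurable_const

omit hindep hident in
lemma ind_meas_amb (L j : ℕ) : Measurable (ind Z L j) :=
  (ind_meas hmeas hZ0 hZrec L j).mono (GS_le hmeas _) le_rfl

omit hindep hident hZ0 hZrec in
lemma cast_meas (q : ℕ × ℕ) : Measurable fun ω => (ξ q ω : ℝ≥0∞) :=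
  measurable_from_top.comp (hmeas q)

omit hmeas hindep hident hZ0 hZrec in
lemma lq_notin (L j : ℕ) : ((L, j) : ℕ × ℕ) ∉ past L := by
  simp [past]

/-- linear one-step identity -/
lemma lin_step (L : ℕ) {h : Ω → ℝ≥0∞} (hh : Measurable[GS ξ (past L)] h) :
    ∫⁻ ω, h ω * (Z (L + 1) ω : ℝ≥0∞) ∂ℙ
      = (∫⁻ ω, h ω * (Z L ω : ℝ≥0∞) ∂ℙ) * e ξ 1 := by
  have hhI : ∀ j : ℕ, Measurable[GS ξ (past L)] fun ω => h ω * ind Z L j ω :=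
    fun j => hh.mul (ind_meas hmeas hZ0 hZrec L j)
  have hhamb : Measurable h := hh.mono (GS_le hmeas _) le_rfl
  have step1 : ∫⁻ ω, h ω * (Z (L + 1) ω : ℝ≥0∞) ∂ℙ
      = ∫⁻ ω, ∑' j, (h ω * ind Z L j ω) * ((ξ (L, j) ω : ℝ≥0∞)) ∂ℙ := by
    refine lintegral_congr fun ω => ?_
    rw [X_succ hZrec L ω, ← ENNReal.tsum_mul_left]
    exact tsum_congr fun j => by ring
  rw [step1, lintegral_tsum (f := fun j ω => h ω * ind Z L j ω * (ξ (L, j) ω : ℝ≥0∞)) (fun j =>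
    (((hhI j).mono (GS_le hmeas _) le_rfl).mul (cast_meas hmeas (L, j))).aemeasurable)]
  have step3 : ∀ j : ℕ, ∫⁻ ω, (h ω * ind Z L j ω) * (ξ (L, j) ω : ℝ≥0∞) ∂ℙ
      = (∫⁻ ω, h ω * ind Z L j ω ∂ℙ) * e ξ 1 := by
    intro j
    have := fact_lemma hmeas hindep hident (lq_notin L j) (hhI j)
      (fun n => (n : ℝ≥0∞) ^ 1)
    simpa [e] using this
  simp only [step3]
  rw [ENNReal.tsum_mul_right]
  congr 1
  rw [← lintegral_tsum (fun j => ((hhI j).mono (GS_le hmeas _) le_rfl).aemeasurable)]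
  refine lintegral_congr fun ω => ?_
  rw [X_eq L ω]
  exact ENNReal.tsum_mul_left

omit hindep hident in
lemma ind_mul_self (L j : ℕ) (ω : Ω) : ind Z L j ω * ind Z L j ω = ind Z L j ω := by
  unfold ind; split <;> simp

omit hindep hident in
/-- summing the indicator gives the population size (inside the integral) -/
lemma sum_ind (L : ℕ) {g : Ω → ℝ≥0∞} (hg : Measurable g) :
    ∑' j, ∫⁻ ω, g ω * ind Z L j ω ∂ℙ = ∫⁻ ω, g ω * (Z L ω : ℝ≥0∞) ∂ℙ := by
  rw [← lintegral_tsum (f := fun j ω => g ω * ind Z L j ω) (fun j => (hg.mul (ind_meas_amb hmeas hZ0 hZrec L j)).aemeasurable)]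
  refine lintegral_congr fun ω => ?_
  rw [X_eq L ω]
  exact ENNReal.tsum_mul_left

omit hindep hident in
lemma sum_ind2 (L : ℕ) {g : Ω → ℝ≥0∞} (hg : Measurable g) :
    ∑' j, ∑' j', ∫⁻ ω, g ω * (ind Z L j ω * ind Z L j' ω) ∂ℙ
      = ∫⁻ ω, g ω * (Z L ω : ℝ≥0∞) ^ 2 ∂ℙ := by
  have inner : ∀ j : ℕ, ∑' j', ∫⁻ ω, g ω * (ind Z L j ω * ind Z L j' ω) ∂ℙ
      = ∫⁻ ω, (g ω * (Z L ω : ℝ≥0∞)) * ind Z L j ω ∂ℙ := by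
    intro j
    have h1 := sum_ind hmeas hZ0 hZrec L (g := fun ω => g ω * ind Z L j ω)
      (hg.mul (ind_meas_amb hmeas hZ0 hZrec L j))
    calc ∑' j', ∫⁻ ω, g ω * (ind Z L j ω * ind Z L j' ω) ∂ℙ
        = ∑' j', ∫⁻ ω, (g ω * ind Z L j ω) * ind Z L j' ω ∂ℙ :=
          tsum_congr fun j' => lintegral_congr fun ω => by ring
      _ = ∫⁻ ω, (g ω * ind Z L j ω) * (Z L ω : ℝ≥0∞) ∂ℙ := h1
      _ = ∫⁻ ω, (g ω * (Z L ω : ℝ≥0∞)) * ind Z L j ω ∂ℙ :=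
          lintegral_congr fun ω => by ring
  simp only [inner]
  have h2 := sum_ind hmeas hZ0 hZrec L (g := fun ω => g ω * (Z L ω : ℝ≥0∞))
    (hg.mul (measurable_from_top.comp (Z_meas hmeas hZ0 hZrec L)))
  calc ∑' j, ∫⁻ ω, (g ω * (Z L ω : ℝ≥0∞)) * ind Z L j ω ∂ℙ
      = ∫⁻ ω, (g ω * (Z L ω : ℝ≥0∞)) * (Z L ω : ℝ≥0∞) ∂ℙ := h2
    _ = ∫⁻ ω, g ω * (Z L ω : ℝ≥0∞) ^ 2 ∂ℙ := lintegral_congr fun ω => by ring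

omit hindep hident in
lemma sum_ind3 (L : ℕ) {g : Ω → ℝ≥0∞} (hg : Measurable g) :
    ∑' j1, ∑' j2, ∑' j3, ∫⁻ ω, g ω * (ind Z L j1 ω * ind Z L j2 ω * ind Z L j3 ω) ∂ℙ
      = ∫⁻ ω, g ω * (Z L ω : ℝ≥0∞) ^ 3 ∂ℙ := by
  have inner : ∀ j1 j2 : ℕ, ∑' j3, ∫⁻ ω, g ω * (ind Z L j1 ω * ind Z L j2 ω * ind Z L j3 ω) ∂ℙ
      = ∫⁻ ω, (g ω * (Z L ω : ℝ≥0∞)) * (ind Z L j1 ω * ind Z L j2 ω) ∂ℙ := by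
    intro j1 j2
    have := sum_ind hmeas hZ0 hZrec L (g := fun ω => g ω * (ind Z L j1 ω * ind Z L j2 ω))
      (hg.mul ((ind_meas_amb hmeas hZ0 hZrec L j1).mul (ind_meas_amb hmeas hZ0 hZrec L j2)))
    calc ∑' j3, ∫⁻ ω, g ω * (ind Z L j1 ω * ind Z L j2 ω * ind Z L j3 ω) ∂ℙ
        = ∑' j3, ∫⁻ ω, (g ω * (ind Z L j1 ω * ind Z L j2 ω)) * ind Z L j3 ω ∂ℙ :=
          tsum_congr fun j3 => lintegral_congr fun ω => by ring
      _ = ∫⁻ ω, (g ω * (ind Z L j1 ω * ind Z L j2 ω)) * (Z L ω : ℝ≥0∞) ∂ℙ := this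
      _ = ∫⁻ ω, (g ω * (Z L ω : ℝ≥0∞)) * (ind Z L j1 ω * ind Z L j2 ω) ∂ℙ :=
          lintegral_congr fun ω => by ring
  simp only [inner]
  have h2 := sum_ind2 hmeas hZ0 hZrec L (g := fun ω => g ω * (Z L ω : ℝ≥0∞))
    (hg.mul (measurable_from_top.comp (Z_meas hmeas hZ0 hZrec L)))
  calc ∑' j1, ∑' j2, ∫⁻ ω, (g ω * (Z L ω : ℝ≥0∞)) * (ind Z L j1 ω * ind Z L j2 ω) ∂ℙ
      = ∫⁻ ω, (g ω * (Z L ω : ℝ≥0∞)) * (Z L ω : ℝ≥0∞) ^ 2 ∂ℙ := h2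
    _ = ∫⁻ ω, g ω * (Z L ω : ℝ≥0∞) ^ 3 ∂ℙ := lintegral_congr fun ω => by ring

omit hZ0 hZrec in
lemma peel1 (L : ℕ) {h : Ω → ℝ≥0∞} (hh : Measurable[GS ξ (past L)] h) (j r : ℕ) :
    ∫⁻ ω, h ω * (ξ (L, j) ω : ℝ≥0∞) ^ r ∂ℙ = (∫⁻ ω, h ω ∂ℙ) * e ξ r :=
  fact_lemma hmeas hindep hident (lq_notin L j) hh (fun n => (n : ℝ≥0∞) ^ r)

omit hZ0 hZrec in
lemma peel2 (L : ℕ) {h : Ω → ℝ≥0∞} (hh : Measurable[GS ξ (past L)] h)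
    {j j' : ℕ} (hne : j ≠ j') (r r' : ℕ) :
    ∫⁻ ω, h ω * ((ξ (L, j) ω : ℝ≥0∞) ^ r * (ξ (L, j') ω : ℝ≥0∞) ^ r') ∂ℙ
      = (∫⁻ ω, h ω ∂ℙ) * e ξ r * e ξ r' := by
  have hS : (past L : Set (ℕ × ℕ)) ⊆ past L ∪ {(L, j)} := Set.subset_union_left
  have hj_mem : ((L, j) : ℕ × ℕ) ∈ past L ∪ {(L, j)} := Set.mem_union_right _ rfl
  have hh' : Measurable[GS ξ (past L ∪ {(L, j)})] fun ω => h ω * (ξ (L, j) ω : ℝ≥0∞) ^ r :=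
    (hh.mono (GS_mono hS) le_rfl).mul
      ((measurable_from_top (f := fun n : ℕ => (n : ℝ≥0∞) ^ r)).comp (meas_GS_self hj_mem))
  have hq' : ((L, j') : ℕ × ℕ) ∉ past L ∪ {(L, j)} := by
    simp only [Set.mem_union, Set.mem_singleton_iff, past, Set.mem_setOf_eq]
    rintro (hc | hc)
    · exact absurd hc (lt_irrefl L)
    · exact hne ((Prod.ext_iff.mp hc).2.symm)
  calc ∫⁻ ω, h ω * ((ξ (L, j) ω : ℝ≥0∞) ^ r * (ξ (L, j') ω : ℝ≥0∞) ^ r') ∂ℙ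
      = ∫⁻ ω, (h ω * (ξ (L, j) ω : ℝ≥0∞) ^ r) * (ξ (L, j') ω : ℝ≥0∞) ^ r' ∂ℙ :=
        lintegral_congr fun ω => by ring
    _ = (∫⁻ ω, h ω * (ξ (L, j) ω : ℝ≥0∞) ^ r ∂ℙ) * e ξ r' :=
        fact_lemma hmeas hindep hident hq' hh' (fun n => (n : ℝ≥0∞) ^ r')
    _ = (∫⁻ ω, h ω ∂ℙ) * e ξ r * e ξ r' := by
        rw [peel1 hmeas hindep hident L hh j r]

omit hZ0 hZrec in
lemma peel3 (L : ℕ) {h : Ω → ℝ≥0∞} (hh : Measurable[GS ξ (past L)] h)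
    {j1 j2 j3 : ℕ} (h12 : j1 ≠ j2) (h13 : j1 ≠ j3) (h23 : j2 ≠ j3) :
    ∫⁻ ω, h ω * ((ξ (L, j1) ω : ℝ≥0∞) * (ξ (L, j2) ω : ℝ≥0∞) * (ξ (L, j3) ω : ℝ≥0∞)) ∂ℙ
      = (∫⁻ ω, h ω ∂ℙ) * e ξ 1 * e ξ 1 * e ξ 1 := by
  have hS : (past L : Set (ℕ × ℕ)) ⊆ past L ∪ {(L, j1), (L, j2)} := Set.subset_union_left
  have h1_mem : ((L, j1) : ℕ × ℕ) ∈ past L ∪ {(L, j1), (L, j2)} :=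
    Set.mem_union_right _ (by simp)
  have h2_mem : ((L, j2) : ℕ × ℕ) ∈ past L ∪ {(L, j1), (L, j2)} :=
    Set.mem_union_right _ (by simp)
  have hh' : Measurable[GS ξ (past L ∪ {(L, j1), (L, j2)})]
      fun ω => h ω * ((ξ (L, j1) ω : ℝ≥0∞) * (ξ (L, j2) ω : ℝ≥0∞)) :=
    (hh.mono (GS_mono hS) le_rfl).mul
      (((measurable_from_top (f := fun n : ℕ => (n : ℝ≥0∞))).comp (meas_GS_self h1_mem)).mul
        ((measurable_from_top (f := fun n : ℕ => (n : ℝ≥0∞))).comp (meas_GS_self h2_mem)))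
  have hq' : ((L, j3) : ℕ × ℕ) ∉ past L ∪ {(L, j1), (L, j2)} := by
    simp only [Set.mem_union, Set.mem_insert_iff, Set.mem_singleton_iff, past, Set.mem_setOf_eq]
    rintro (hc | hc | hc)
    · exact absurd hc (lt_irrefl L)
    · exact h13 ((Prod.ext_iff.mp hc).2.symm)
    · exact h23 ((Prod.ext_iff.mp hc).2.symm)
  calc ∫⁻ ω, h ω * ((ξ (L, j1) ω : ℝ≥0∞) * (ξ (L, j2) ω : ℝ≥0∞) * (ξ (L, j3) ω : ℝ≥0∞)) ∂ℙ
      = ∫⁻ ω, (h ω * ((ξ (L, j1) ω : ℝ≥0∞) * (ξ (L, j2) ω : ℝ≥0∞)))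
          * (ξ (L, j3) ω : ℝ≥0∞) ^ 1 ∂ℙ := lintegral_congr fun ω => by ring
    _ = (∫⁻ ω, h ω * ((ξ (L, j1) ω : ℝ≥0∞) * (ξ (L, j2) ω : ℝ≥0∞)) ∂ℙ) * e ξ 1 :=
        fact_lemma hmeas hindep hident hq' hh' (fun n => (n : ℝ≥0∞) ^ 1)
    _ = (∫⁻ ω, h ω ∂ℙ) * e ξ 1 * e ξ 1 * e ξ 1 := by
        have := peel2 hmeas hindep hident L hh h12 1 1
        simp only [pow_one] at this
        rw [this]

/-- quadratic one-step bound -/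
lemma quad_step (L : ℕ) {h : Ω → ℝ≥0∞} (hh : Measurable[GS ξ (past L)] h) :
    ∫⁻ ω, h ω * (Z (L + 1) ω : ℝ≥0∞) ^ 2 ∂ℙ
      ≤ (∫⁻ ω, h ω * (Z L ω : ℝ≥0∞) ∂ℙ) * e ξ 2
        + (∫⁻ ω, h ω * (Z L ω : ℝ≥0∞) ^ 2 ∂ℙ) * (e ξ 1 * e ξ 1) := by
  have hhamb : Measurable h := hh.mono (GS_le hmeas _) le_rfl
  have hIm : ∀ j, Measurable[GS ξ (past L)] (ind Z L j) := ind_meas hmeas hZ0 hZrec L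
  have hIamb : ∀ j, Measurable (ind Z L j) := ind_meas_amb hmeas hZ0 hZrec L
  set T : ℕ → ℕ → ℝ≥0∞ := fun j j' =>
    ∫⁻ ω, (h ω * (ind Z L j ω * ind Z L j' ω)) * ((ξ (L, j) ω : ℝ≥0∞) * (ξ (L, j') ω : ℝ≥0∞)) ∂ℙ
    with hT
  have hterm_meas : ∀ j j', Measurable fun ω =>
      (h ω * (ind Z L j ω * ind Z L j' ω)) * ((ξ (L, j) ω : ℝ≥0∞) * (ξ (L, j') ω : ℝ≥0∞)) :=
    fun j j' => ((hhamb.mul ((hIamb j).mul (hIamb j'))).mul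
      ((cast_meas hmeas (L, j)).mul (cast_meas hmeas (L, j'))))
  have expand : ∫⁻ ω, h ω * (Z (L + 1) ω : ℝ≥0∞) ^ 2 ∂ℙ = ∑' j, ∑' j', T j j' := by
    have pt : ∀ ω, h ω * (Z (L + 1) ω : ℝ≥0∞) ^ 2
        = ∑' j, ∑' j', (h ω * (ind Z L j ω * ind Z L j' ω))
            * ((ξ (L, j) ω : ℝ≥0∞) * (ξ (L, j') ω : ℝ≥0∞)) := by
      intro ω
      symm
      calc ∑' j, ∑' j', (h ω * (ind Z L j ω * ind Z L j' ω))
            * ((ξ (L, j) ω : ℝ≥0∞) * (ξ (L, j') ω : ℝ≥0∞))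
          = ∑' j, (h ω * (ind Z L j ω * (ξ (L, j) ω : ℝ≥0∞)))
              * ∑' j', ind Z L j' ω * (ξ (L, j') ω : ℝ≥0∞) := by
            refine tsum_congr fun j => ?_
            rw [← ENNReal.tsum_mul_left]
            exact tsum_congr fun j' => by ring
        _ = (h ω * ∑' j, ind Z L j ω * (ξ (L, j) ω : ℝ≥0∞))
              * ∑' j', ind Z L j' ω * (ξ (L, j') ω : ℝ≥0∞) := by
            rw [ENNReal.tsum_mul_right, ENNReal.tsum_mul_left]
        _ = h ω * (Z (L + 1) ω : ℝ≥0∞) ^ 2 := by rw [← X_succ hZrec L ω]; ring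
    simp only [pt]
    rw [lintegral_tsum (fun j => (Measurable.ennreal_tsum fun j' => hterm_meas j j').aemeasurable)]
    exact tsum_congr fun j => lintegral_tsum fun j' => (hterm_meas j j').aemeasurable
  have bound : ∀ j j', T j j'
      ≤ (if j' = j then (∫⁻ ω, h ω * ind Z L j ω ∂ℙ) * e ξ 2 else 0)
        + (∫⁻ ω, h ω * (ind Z L j ω * ind Z L j' ω) ∂ℙ) * (e ξ 1 * e ξ 1) := by
    intro j j'
    by_cases hjj : j' = j
    · subst hjj
      have hcalc : T j' j' = (∫⁻ ω, h ω * ind Z L j' ω ∂ℙ) * e ξ 2 := by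
        rw [hT]
        calc ∫⁻ ω, (h ω * (ind Z L j' ω * ind Z L j' ω))
              * ((ξ (L, j') ω : ℝ≥0∞) * (ξ (L, j') ω : ℝ≥0∞)) ∂ℙ
            = ∫⁻ ω, (h ω * ind Z L j' ω) * (ξ (L, j') ω : ℝ≥0∞) ^ 2 ∂ℙ :=
              lintegral_congr fun ω => by rw [ind_mul_self hmeas hZ0 hZrec]; ring
          _ = (∫⁻ ω, h ω * ind Z L j' ω ∂ℙ) * e ξ 2 :=
              peel1 hmeas hindep hident L (hh.mul (hIm j')) j' 2
      rw [if_pos rfl]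
      exact hcalc ▸ le_self_add
    · have hcalc : T j j' = (∫⁻ ω, h ω * (ind Z L j ω * ind Z L j' ω) ∂ℙ) * (e ξ 1 * e ξ 1) := by
        rw [hT]
        calc ∫⁻ ω, (h ω * (ind Z L j ω * ind Z L j' ω))
              * ((ξ (L, j) ω : ℝ≥0∞) * (ξ (L, j') ω : ℝ≥0∞)) ∂ℙ
            = ∫⁻ ω, (h ω * (ind Z L j ω * ind Z L j' ω))
                * ((ξ (L, j) ω : ℝ≥0∞) ^ 1 * (ξ (L, j') ω : ℝ≥0∞) ^ 1) ∂ℙ := by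
              simp [pow_one]
          _ = (∫⁻ ω, h ω * (ind Z L j ω * ind Z L j' ω) ∂ℙ) * e ξ 1 * e ξ 1 :=
              peel2 hmeas hindep hident L (hh.mul ((hIm j).mul (hIm j')))
                (fun hc => hjj hc.symm) 1 1
          _ = (∫⁻ ω, h ω * (ind Z L j ω * ind Z L j' ω) ∂ℙ) * (e ξ 1 * e ξ 1) := by ring
      rw [if_neg hjj, zero_add]
      exact le_of_eq hcalc
  calc ∫⁻ ω, h ω * (Z (L + 1) ω : ℝ≥0∞) ^ 2 ∂ℙ = ∑' j, ∑' j', T j j' := expand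
    _ ≤ ∑' j, ∑' j', ((if j' = j then (∫⁻ ω, h ω * ind Z L j ω ∂ℙ) * e ξ 2 else 0)
          + (∫⁻ ω, h ω * (ind Z L j ω * ind Z L j' ω) ∂ℙ) * (e ξ 1 * e ξ 1)) :=
        ENNReal.tsum_le_tsum fun j => ENNReal.tsum_le_tsum fun j' => bound j j'
    _ = (∑' j, ∑' j', (if j' = j then (∫⁻ ω, h ω * ind Z L j ω ∂ℙ) * e ξ 2 else 0))
          + ∑' j, ∑' j', (∫⁻ ω, h ω * (ind Z L j ω * ind Z L j' ω) ∂ℙ) * (e ξ 1 * e ξ 1) := by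
        rw [← ENNReal.tsum_add]
        exact tsum_congr fun j => ENNReal.tsum_add
    _ = (∫⁻ ω, h ω * (Z L ω : ℝ≥0∞) ∂ℙ) * e ξ 2
          + (∫⁻ ω, h ω * (Z L ω : ℝ≥0∞) ^ 2 ∂ℙ) * (e ξ 1 * e ξ 1) := by
        congr 1
        · have hdiag : ∀ j : ℕ, (∑' j', (if j' = j then (∫⁻ ω, h ω * ind Z L j ω ∂ℙ) * e ξ 2 else 0))
              = (∫⁻ ω, h ω * ind Z L j ω ∂ℙ) * e ξ 2 := by
            intro j
            rw [tsum_eq_single j (fun j' hj' => if_neg hj')]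
            exact if_pos rfl
          simp only [hdiag]
          rw [ENNReal.tsum_mul_right, sum_ind hmeas hZ0 hZrec L hhamb]
        · calc ∑' (j : ℕ) (j' : ℕ),
                (∫⁻ ω, h ω * (ind Z L j ω * ind Z L j' ω) ∂ℙ) * (e ξ 1 * e ξ 1)
              = ∑' (j : ℕ), (∑' (j' : ℕ), ∫⁻ ω, h ω * (ind Z L j ω * ind Z L j' ω) ∂ℙ)
                  * (e ξ 1 * e ξ 1) := tsum_congr fun j => ENNReal.tsum_mul_right
            _ = (∑' (j : ℕ) (j' : ℕ), ∫⁻ ω, h ω * (ind Z L j ω * ind Z L j' ω) ∂ℙ)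
                  * (e ξ 1 * e ξ 1) := ENNReal.tsum_mul_right
            _ = (∫⁻ ω, h ω * (Z L ω : ℝ≥0∞) ^ 2 ∂ℙ) * (e ξ 1 * e ξ 1) := by
                rw [sum_ind2 hmeas hZ0 hZrec L hhamb]

omit hmeas hindep hident hZ0 hZrec in
lemma tsum_ite_pivot (p : ℕ) (f : ℕ → ℝ≥0∞) :
    (∑' x, if x = p then f x else 0) = f p := by
  rw [tsum_eq_single p (fun x hx => if_neg hx)]
  exact if_pos rfl

omit hmeas hindep hident hZ0 hZrec in
lemma tsum3_add (f g : ℕ → ℕ → ℕ → ℝ≥0∞) :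
    (∑' (j1 : ℕ) (j2 : ℕ) (j3 : ℕ), (f j1 j2 j3 + g j1 j2 j3))
      = (∑' (j1 : ℕ) (j2 : ℕ) (j3 : ℕ), f j1 j2 j3)
        + ∑' (j1 : ℕ) (j2 : ℕ) (j3 : ℕ), g j1 j2 j3 := by
  rw [← ENNReal.tsum_add]
  refine tsum_congr fun j1 => ?_
  rw [← ENNReal.tsum_add]
  exact tsum_congr fun j2 => ENNReal.tsum_add

/-- cubic one-step bound -/
lemma cubic_step (L : ℕ) {h : Ω → ℝ≥0∞} (hh : Measurable[GS ξ (past L)] h) :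
    ∫⁻ ω, h ω * (Z (L + 1) ω : ℝ≥0∞) ^ 3 ∂ℙ
      ≤ (∫⁻ ω, h ω * (Z L ω : ℝ≥0∞) ∂ℙ) * e ξ 3
        + ((∫⁻ ω, h ω * (Z L ω : ℝ≥0∞) ^ 2 ∂ℙ) * (e ξ 2 * e ξ 1)
        + ((∫⁻ ω, h ω * (Z L ω : ℝ≥0∞) ^ 2 ∂ℙ) * (e ξ 2 * e ξ 1)
        + ((∫⁻ ω, h ω * (Z L ω : ℝ≥0∞) ^ 2 ∂ℙ) * (e ξ 2 * e ξ 1)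
        + (∫⁻ ω, h ω * (Z L ω : ℝ≥0∞) ^ 3 ∂ℙ) * (e ξ 1 * e ξ 1 * e ξ 1)))) := by
  have hhamb : Measurable h := hh.mono (GS_le hmeas _) le_rfl
  have hIm : ∀ j, Measurable[GS ξ (past L)] (ind Z L j) := ind_meas hmeas hZ0 hZrec L
  have hIamb : ∀ j, Measurable (ind Z L j) := ind_meas_amb hmeas hZ0 hZrec L
  set T : ℕ → ℕ → ℕ → ℝ≥0∞ := fun j1 j2 j3 =>
    ∫⁻ ω, (h ω * (ind Z L j1 ω * ind Z L j2 ω * ind Z L j3 ω))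
      * ((ξ (L, j1) ω : ℝ≥0∞) * (ξ (L, j2) ω : ℝ≥0∞) * (ξ (L, j3) ω : ℝ≥0∞)) ∂ℙ with hT
  have hterm_meas : ∀ j1 j2 j3, Measurable fun ω =>
      (h ω * (ind Z L j1 ω * ind Z L j2 ω * ind Z L j3 ω))
      * ((ξ (L, j1) ω : ℝ≥0∞) * (ξ (L, j2) ω : ℝ≥0∞) * (ξ (L, j3) ω : ℝ≥0∞)) :=
    fun j1 j2 j3 => (hhamb.mul (((hIamb j1).mul (hIamb j2)).mul (hIamb j3))).mul
      (((cast_meas hmeas (L, j1)).mul (cast_meas hmeas (L, j2))).mul (cast_meas hmeas (L, j3)))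
  have expand : ∫⁻ ω, h ω * (Z (L + 1) ω : ℝ≥0∞) ^ 3 ∂ℙ
      = ∑' (j1 : ℕ) (j2 : ℕ) (j3 : ℕ), T j1 j2 j3 := by
    have pt : ∀ ω, h ω * (Z (L + 1) ω : ℝ≥0∞) ^ 3
        = ∑' (j1 : ℕ) (j2 : ℕ) (j3 : ℕ), (h ω * (ind Z L j1 ω * ind Z L j2 ω * ind Z L j3 ω))
            * ((ξ (L, j1) ω : ℝ≥0∞) * (ξ (L, j2) ω : ℝ≥0∞) * (ξ (L, j3) ω : ℝ≥0∞)) := by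
      intro ω
      set W : ℝ≥0∞ := ∑' j, ind Z L j ω * (ξ (L, j) ω : ℝ≥0∞) with hW
      have hXW : (Z (L + 1) ω : ℝ≥0∞) = W := X_succ hZrec L ω
      symm
      calc ∑' (j1 : ℕ) (j2 : ℕ) (j3 : ℕ), (h ω * (ind Z L j1 ω * ind Z L j2 ω * ind Z L j3 ω))
            * ((ξ (L, j1) ω : ℝ≥0∞) * (ξ (L, j2) ω : ℝ≥0∞) * (ξ (L, j3) ω : ℝ≥0∞))
          = ∑' (j1 : ℕ) (j2 : ℕ), ((h ω * (ind Z L j1 ω * (ξ (L, j1) ω : ℝ≥0∞)))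
              * (ind Z L j2 ω * (ξ (L, j2) ω : ℝ≥0∞))) * W := by
            refine tsum_congr fun j1 => tsum_congr fun j2 => ?_
            rw [hW, ← ENNReal.tsum_mul_left]
            exact tsum_congr fun j3 => by ring
        _ = ∑' (j1 : ℕ), ((h ω * (ind Z L j1 ω * (ξ (L, j1) ω : ℝ≥0∞))) * W) * W := by
            refine tsum_congr fun j1 => ?_
            calc ∑' (j2 : ℕ), ((h ω * (ind Z L j1 ω * (ξ (L, j1) ω : ℝ≥0∞)))
                  * (ind Z L j2 ω * (ξ (L, j2) ω : ℝ≥0∞))) * W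
                = ∑' (j2 : ℕ), ((h ω * (ind Z L j1 ω * (ξ (L, j1) ω : ℝ≥0∞))) * W)
                    * (ind Z L j2 ω * (ξ (L, j2) ω : ℝ≥0∞)) :=
                  tsum_congr fun j2 => by ring
              _ = ((h ω * (ind Z L j1 ω * (ξ (L, j1) ω : ℝ≥0∞))) * W) * W := by
                  rw [ENNReal.tsum_mul_left, ← hW]
        _ = h ω * (Z (L + 1) ω : ℝ≥0∞) ^ 3 := by
            calc ∑' (j1 : ℕ), ((h ω * (ind Z L j1 ω * (ξ (L, j1) ω : ℝ≥0∞))) * W) * W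
                = ∑' (j1 : ℕ), (h ω * (W * W)) * (ind Z L j1 ω * (ξ (L, j1) ω : ℝ≥0∞)) :=
                  tsum_congr fun j1 => by ring
              _ = (h ω * (W * W)) * W := by rw [ENNReal.tsum_mul_left, ← hW]
              _ = h ω * (Z (L + 1) ω : ℝ≥0∞) ^ 3 := by rw [hXW]; ring
    simp only [pt]
    rw [lintegral_tsum (fun j1 => (Measurable.ennreal_tsum fun j2 =>
      Measurable.ennreal_tsum fun j3 => hterm_meas j1 j2 j3).aemeasurable)]
    refine tsum_congr fun j1 => ?_
    rw [lintegral_tsum (fun j2 => (Measurable.ennreal_tsum fun j3 =>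
      hterm_meas j1 j2 j3).aemeasurable)]
    exact tsum_congr fun j2 => lintegral_tsum fun j3 => (hterm_meas j1 j2 j3).aemeasurable
  set S1 : ℕ → ℕ → ℕ → ℝ≥0∞ := fun j1 j2 j3 =>
    if j2 = j1 ∧ j3 = j1 then (∫⁻ ω, h ω * ind Z L j1 ω ∂ℙ) * e ξ 3 else 0 with hS1
  set S2 : ℕ → ℕ → ℕ → ℝ≥0∞ := fun j1 j2 j3 =>
    if j2 = j1 then (∫⁻ ω, h ω * (ind Z L j1 ω * ind Z L j3 ω) ∂ℙ) * (e ξ 2 * e ξ 1) else 0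
    with hS2
  set S3 : ℕ → ℕ → ℕ → ℝ≥0∞ := fun j1 j2 j3 =>
    if j3 = j2 then (∫⁻ ω, h ω * (ind Z L j1 ω * ind Z L j2 ω) ∂ℙ) * (e ξ 2 * e ξ 1) else 0
    with hS3
  set S4 : ℕ → ℕ → ℕ → ℝ≥0∞ := fun j1 j2 j3 =>
    if j3 = j1 then (∫⁻ ω, h ω * (ind Z L j1 ω * ind Z L j2 ω) ∂ℙ) * (e ξ 2 * e ξ 1) else 0
    with hS4
  set S5 : ℕ → ℕ → ℕ → ℝ≥0∞ := fun j1 j2 j3 =>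
    (∫⁻ ω, h ω * (ind Z L j1 ω * ind Z L j2 ω * ind Z L j3 ω) ∂ℙ) * (e ξ 1 * e ξ 1 * e ξ 1)
    with hS5
  have bound : ∀ j1 j2 j3, T j1 j2 j3
      ≤ S1 j1 j2 j3 + (S2 j1 j2 j3 + (S3 j1 j2 j3 + (S4 j1 j2 j3 + S5 j1 j2 j3))) := by
    intro j1 j2 j3
    by_cases h21 : j2 = j1
    · by_cases h31 : j3 = j1
      · -- all equal
        simp only [h21, h31]
        have hcalc : T j1 j1 j1 = (∫⁻ ω, h ω * ind Z L j1 ω ∂ℙ) * e ξ 3 := by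
          rw [hT]
          calc ∫⁻ ω, (h ω * (ind Z L j1 ω * ind Z L j1 ω * ind Z L j1 ω))
                * ((ξ (L, j1) ω : ℝ≥0∞) * (ξ (L, j1) ω : ℝ≥0∞) * (ξ (L, j1) ω : ℝ≥0∞)) ∂ℙ
              = ∫⁻ ω, (h ω * ind Z L j1 ω) * (ξ (L, j1) ω : ℝ≥0∞) ^ 3 ∂ℙ := by
                refine lintegral_congr fun ω => ?_
                rw [ind_mul_self hmeas hZ0 hZrec, ind_mul_self hmeas hZ0 hZrec]
                ring
            _ = (∫⁻ ω, h ω * ind Z L j1 ω ∂ℙ) * e ξ 3 :=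
                peel1 hmeas hindep hident L (hh.mul (hIm j1)) j1 3
        rw [hS1]
        simp only [if_pos (⟨rfl, rfl⟩ : j1 = j1 ∧ j1 = j1)]
        exact hcalc ▸ le_self_add
      · -- j2 = j1, j3 ≠ j1
        simp only [h21]
        have hcalc : T j1 j1 j3
            = (∫⁻ ω, h ω * (ind Z L j1 ω * ind Z L j3 ω) ∂ℙ) * (e ξ 2 * e ξ 1) := by
          rw [hT]
          calc ∫⁻ ω, (h ω * (ind Z L j1 ω * ind Z L j1 ω * ind Z L j3 ω))
                * ((ξ (L, j1) ω : ℝ≥0∞) * (ξ (L, j1) ω : ℝ≥0∞) * (ξ (L, j3) ω : ℝ≥0∞)) ∂ℙ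
              = ∫⁻ ω, (h ω * (ind Z L j1 ω * ind Z L j3 ω))
                  * ((ξ (L, j1) ω : ℝ≥0∞) ^ 2 * (ξ (L, j3) ω : ℝ≥0∞) ^ 1) ∂ℙ := by
                refine lintegral_congr fun ω => ?_
                rw [ind_mul_self hmeas hZ0 hZrec]
                ring
            _ = (∫⁻ ω, h ω * (ind Z L j1 ω * ind Z L j3 ω) ∂ℙ) * e ξ 2 * e ξ 1 :=
                peel2 hmeas hindep hident L (hh.mul ((hIm j1).mul (hIm j3)))
                  (fun hc => h31 hc.symm) 2 1
            _ = (∫⁻ ω, h ω * (ind Z L j1 ω * ind Z L j3 ω) ∂ℙ) * (e ξ 2 * e ξ 1) := by ring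
        rw [hS2]
        simp only [if_pos (rfl : j1 = j1)]
        exact hcalc ▸ le_add_left le_self_add
    · by_cases h32 : j3 = j2
      · -- j3 = j2 ≠ j1
        simp only [h32]
        have hcalc : T j1 j2 j2
            = (∫⁻ ω, h ω * (ind Z L j1 ω * ind Z L j2 ω) ∂ℙ) * (e ξ 2 * e ξ 1) := by
          rw [hT]
          calc ∫⁻ ω, (h ω * (ind Z L j1 ω * ind Z L j2 ω * ind Z L j2 ω))
                * ((ξ (L, j1) ω : ℝ≥0∞) * (ξ (L, j2) ω : ℝ≥0∞) * (ξ (L, j2) ω : ℝ≥0∞)) ∂ℙ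
              = ∫⁻ ω, (h ω * (ind Z L j1 ω * ind Z L j2 ω))
                  * ((ξ (L, j2) ω : ℝ≥0∞) ^ 2 * (ξ (L, j1) ω : ℝ≥0∞) ^ 1) ∂ℙ := by
                refine lintegral_congr fun ω => ?_
                rw [show ind Z L j1 ω * ind Z L j2 ω * ind Z L j2 ω
                    = ind Z L j1 ω * (ind Z L j2 ω * ind Z L j2 ω) from by ring,
                  ind_mul_self hmeas hZ0 hZrec]
                ring
            _ = (∫⁻ ω, h ω * (ind Z L j1 ω * ind Z L j2 ω) ∂ℙ) * e ξ 2 * e ξ 1 :=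
                peel2 hmeas hindep hident L (hh.mul ((hIm j1).mul (hIm j2)))
                  (j := j2) (j' := j1) h21 2 1
            _ = (∫⁻ ω, h ω * (ind Z L j1 ω * ind Z L j2 ω) ∂ℙ) * (e ξ 2 * e ξ 1) := by ring
        rw [hS3]
        simp only [if_pos (rfl : j2 = j2)]
        exact hcalc ▸ le_add_left (le_add_left le_self_add)
      · by_cases h31 : j3 = j1
        · -- j3 = j1 ≠ j2
          simp only [h31]
          have hcalc : T j1 j2 j1
              = (∫⁻ ω, h ω * (ind Z L j1 ω * ind Z L j2 ω) ∂ℙ) * (e ξ 2 * e ξ 1) := by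
            rw [hT]
            calc ∫⁻ ω, (h ω * (ind Z L j1 ω * ind Z L j2 ω * ind Z L j1 ω))
                  * ((ξ (L, j1) ω : ℝ≥0∞) * (ξ (L, j2) ω : ℝ≥0∞) * (ξ (L, j1) ω : ℝ≥0∞)) ∂ℙ
                = ∫⁻ ω, (h ω * (ind Z L j1 ω * ind Z L j2 ω))
                    * ((ξ (L, j1) ω : ℝ≥0∞) ^ 2 * (ξ (L, j2) ω : ℝ≥0∞) ^ 1) ∂ℙ := by
                  refine lintegral_congr fun ω => ?_
                  rw [show ind Z L j1 ω * ind Z L j2 ω * ind Z L j1 ω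
                      = ind Z L j1 ω * ind Z L j1 ω * ind Z L j2 ω from by ring,
                    ind_mul_self hmeas hZ0 hZrec]
                  ring
              _ = (∫⁻ ω, h ω * (ind Z L j1 ω * ind Z L j2 ω) ∂ℙ) * e ξ 2 * e ξ 1 :=
                  peel2 hmeas hindep hident L (hh.mul ((hIm j1).mul (hIm j2)))
                    (fun hc => h21 hc.symm) 2 1
              _ = (∫⁻ ω, h ω * (ind Z L j1 ω * ind Z L j2 ω) ∂ℙ) * (e ξ 2 * e ξ 1) := by
                  ring
          rw [hS4]
          simp only [if_pos (rfl : j1 = j1)]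
          exact hcalc ▸ le_add_left (le_add_left (le_add_left le_self_add))
        · -- all distinct
          have hcalc : T j1 j2 j3
              = (∫⁻ ω, h ω * (ind Z L j1 ω * ind Z L j2 ω * ind Z L j3 ω) ∂ℙ)
                  * (e ξ 1 * e ξ 1 * e ξ 1) := by
            rw [hT]
            have := peel3 hmeas hindep hident L
              (hh.mul (((hIm j1).mul (hIm j2)).mul (hIm j3)))
              (j1 := j1) (j2 := j2) (j3 := j3)
              (fun hc => h21 hc.symm) (fun hc => h31 hc.symm) (fun hc => h32 hc.symm)
            calc ∫⁻ ω, (h ω * (ind Z L j1 ω * ind Z L j2 ω * ind Z L j3 ω))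
                  * ((ξ (L, j1) ω : ℝ≥0∞) * (ξ (L, j2) ω : ℝ≥0∞) * (ξ (L, j3) ω : ℝ≥0∞)) ∂ℙ
                = (∫⁻ ω, h ω * (ind Z L j1 ω * ind Z L j2 ω * ind Z L j3 ω) ∂ℙ)
                    * e ξ 1 * e ξ 1 * e ξ 1 := this
              _ = (∫⁻ ω, h ω * (ind Z L j1 ω * ind Z L j2 ω * ind Z L j3 ω) ∂ℙ)
                    * (e ξ 1 * e ξ 1 * e ξ 1) := by ring
          exact hcalc ▸ le_add_left (le_add_left (le_add_left (le_add_left le_rfl)))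
  have sumS1 : (∑' (j1 : ℕ) (j2 : ℕ) (j3 : ℕ), S1 j1 j2 j3)
      = (∫⁻ ω, h ω * (Z L ω : ℝ≥0∞) ∂ℙ) * e ξ 3 := by
    have c1 : ∀ j1 : ℕ, (∑' (j2 : ℕ) (j3 : ℕ), S1 j1 j2 j3)
        = (∫⁻ ω, h ω * ind Z L j1 ω ∂ℙ) * e ξ 3 := by
      intro j1
      have inner : ∀ j2 : ℕ, (∑' (j3 : ℕ), S1 j1 j2 j3)
          = if j2 = j1 then (∫⁻ ω, h ω * ind Z L j1 ω ∂ℙ) * e ξ 3 else 0 := by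
        intro j2
        by_cases hj : j2 = j1
        · simp only [hS1, hj, true_and, if_pos rfl]
          exact tsum_ite_pivot j1 _
        · simp [hS1, hj]
      simp only [inner]
      exact tsum_ite_pivot j1 _
    simp only [c1]
    rw [ENNReal.tsum_mul_right, sum_ind hmeas hZ0 hZrec L hhamb]
  have sumS2 : (∑' (j1 : ℕ) (j2 : ℕ) (j3 : ℕ), S2 j1 j2 j3)
      = (∫⁻ ω, h ω * (Z L ω : ℝ≥0∞) ^ 2 ∂ℙ) * (e ξ 2 * e ξ 1) := by
    have c1 : ∀ j1 : ℕ, (∑' (j2 : ℕ) (j3 : ℕ), S2 j1 j2 j3)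
        = ∑' (j3 : ℕ), (∫⁻ ω, h ω * (ind Z L j1 ω * ind Z L j3 ω) ∂ℙ) * (e ξ 2 * e ξ 1) := by
      intro j1
      have inner : ∀ j2 : ℕ, (∑' (j3 : ℕ), S2 j1 j2 j3)
          = if j2 = j1 then
              (∑' (j3 : ℕ), (∫⁻ ω, h ω * (ind Z L j1 ω * ind Z L j3 ω) ∂ℙ) * (e ξ 2 * e ξ 1))
            else 0 := by
        intro j2
        by_cases hj : j2 = j1
        · simp only [hS2, hj, if_pos rfl]
          rw [if_pos trivial]
        · simp [hS2, hj]
      simp only [inner]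
      exact tsum_ite_pivot j1 _
    simp only [c1]
    calc ∑' (j1 : ℕ) (j3 : ℕ),
          (∫⁻ ω, h ω * (ind Z L j1 ω * ind Z L j3 ω) ∂ℙ) * (e ξ 2 * e ξ 1)
        = ∑' (j1 : ℕ), (∑' (j3 : ℕ), ∫⁻ ω, h ω * (ind Z L j1 ω * ind Z L j3 ω) ∂ℙ)
            * (e ξ 2 * e ξ 1) := tsum_congr fun j1 => ENNReal.tsum_mul_right
      _ = (∑' (j1 : ℕ) (j3 : ℕ), ∫⁻ ω, h ω * (ind Z L j1 ω * ind Z L j3 ω) ∂ℙ)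
            * (e ξ 2 * e ξ 1) := ENNReal.tsum_mul_right
      _ = (∫⁻ ω, h ω * (Z L ω : ℝ≥0∞) ^ 2 ∂ℙ) * (e ξ 2 * e ξ 1) := by
          rw [sum_ind2 hmeas hZ0 hZrec L hhamb]
  have pull2 : ∀ c : ℝ≥0∞, (∑' (j1 : ℕ) (j2 : ℕ),
        (∫⁻ ω, h ω * (ind Z L j1 ω * ind Z L j2 ω) ∂ℙ) * c)
      = (∫⁻ ω, h ω * (Z L ω : ℝ≥0∞) ^ 2 ∂ℙ) * c := by
    intro c
    calc ∑' (j1 : ℕ) (j2 : ℕ), (∫⁻ ω, h ω * (ind Z L j1 ω * ind Z L j2 ω) ∂ℙ) * c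
        = ∑' (j1 : ℕ), (∑' (j2 : ℕ), ∫⁻ ω, h ω * (ind Z L j1 ω * ind Z L j2 ω) ∂ℙ) * c :=
          tsum_congr fun j1 => ENNReal.tsum_mul_right
      _ = (∑' (j1 : ℕ) (j2 : ℕ), ∫⁻ ω, h ω * (ind Z L j1 ω * ind Z L j2 ω) ∂ℙ) * c :=
          ENNReal.tsum_mul_right
      _ = (∫⁻ ω, h ω * (Z L ω : ℝ≥0∞) ^ 2 ∂ℙ) * c := by
          rw [sum_ind2 hmeas hZ0 hZrec L hhamb]
  have sumS3 : (∑' (j1 : ℕ) (j2 : ℕ) (j3 : ℕ), S3 j1 j2 j3)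
      = (∫⁻ ω, h ω * (Z L ω : ℝ≥0∞) ^ 2 ∂ℙ) * (e ξ 2 * e ξ 1) := by
    have inner : ∀ j1 j2 : ℕ, (∑' (j3 : ℕ), S3 j1 j2 j3)
        = (∫⁻ ω, h ω * (ind Z L j1 ω * ind Z L j2 ω) ∂ℙ) * (e ξ 2 * e ξ 1) := by
      intro j1 j2
      simp only [hS3]
      exact tsum_ite_pivot j2 _
    simp only [inner]
    exact pull2 _
  have sumS4 : (∑' (j1 : ℕ) (j2 : ℕ) (j3 : ℕ), S4 j1 j2 j3)
      = (∫⁻ ω, h ω * (Z L ω : ℝ≥0∞) ^ 2 ∂ℙ) * (e ξ 2 * e ξ 1) := by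
    have inner : ∀ j1 j2 : ℕ, (∑' (j3 : ℕ), S4 j1 j2 j3)
        = (∫⁻ ω, h ω * (ind Z L j1 ω * ind Z L j2 ω) ∂ℙ) * (e ξ 2 * e ξ 1) := by
      intro j1 j2
      simp only [hS4]
      exact tsum_ite_pivot j1 _
    simp only [inner]
    exact pull2 _
  have sumS5 : (∑' (j1 : ℕ) (j2 : ℕ) (j3 : ℕ), S5 j1 j2 j3)
      = (∫⁻ ω, h ω * (Z L ω : ℝ≥0∞) ^ 3 ∂ℙ) * (e ξ 1 * e ξ 1 * e ξ 1) := by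
    calc ∑' (j1 : ℕ) (j2 : ℕ) (j3 : ℕ), S5 j1 j2 j3
        = ∑' (j1 : ℕ) (j2 : ℕ),
            (∑' (j3 : ℕ), ∫⁻ ω, h ω * (ind Z L j1 ω * ind Z L j2 ω * ind Z L j3 ω) ∂ℙ)
              * (e ξ 1 * e ξ 1 * e ξ 1) :=
          tsum_congr fun j1 => tsum_congr fun j2 => ENNReal.tsum_mul_right
      _ = ∑' (j1 : ℕ),
            (∑' (j2 : ℕ) (j3 : ℕ), ∫⁻ ω, h ω * (ind Z L j1 ω * ind Z L j2 ω * ind Z L j3 ω) ∂ℙ)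
              * (e ξ 1 * e ξ 1 * e ξ 1) := tsum_congr fun j1 => ENNReal.tsum_mul_right
      _ = (∑' (j1 : ℕ) (j2 : ℕ) (j3 : ℕ),
            ∫⁻ ω, h ω * (ind Z L j1 ω * ind Z L j2 ω * ind Z L j3 ω) ∂ℙ)
              * (e ξ 1 * e ξ 1 * e ξ 1) := ENNReal.tsum_mul_right
      _ = (∫⁻ ω, h ω * (Z L ω : ℝ≥0∞) ^ 3 ∂ℙ) * (e ξ 1 * e ξ 1 * e ξ 1) := by
          rw [sum_ind3 hmeas hZ0 hZrec L hhamb]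
  calc ∫⁻ ω, h ω * (Z (L + 1) ω : ℝ≥0∞) ^ 3 ∂ℙ
      = ∑' (j1 : ℕ) (j2 : ℕ) (j3 : ℕ), T j1 j2 j3 := expand
    _ ≤ ∑' (j1 : ℕ) (j2 : ℕ) (j3 : ℕ),
          (S1 j1 j2 j3 + (S2 j1 j2 j3 + (S3 j1 j2 j3 + (S4 j1 j2 j3 + S5 j1 j2 j3)))) :=
        ENNReal.tsum_le_tsum fun j1 => ENNReal.tsum_le_tsum fun j2 =>
          ENNReal.tsum_le_tsum fun j3 => bound j1 j2 j3
    _ = (∑' (j1 : ℕ) (j2 : ℕ) (j3 : ℕ), S1 j1 j2 j3)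
          + ((∑' (j1 : ℕ) (j2 : ℕ) (j3 : ℕ), S2 j1 j2 j3)
          + ((∑' (j1 : ℕ) (j2 : ℕ) (j3 : ℕ), S3 j1 j2 j3)
          + ((∑' (j1 : ℕ) (j2 : ℕ) (j3 : ℕ), S4 j1 j2 j3)
          + (∑' (j1 : ℕ) (j2 : ℕ) (j3 : ℕ), S5 j1 j2 j3)))) := by
        rw [tsum3_add, tsum3_add, tsum3_add, tsum3_add]
    _ = (∫⁻ ω, h ω * (Z L ω : ℝ≥0∞) ∂ℙ) * e ξ 3
        + ((∫⁻ ω, h ω * (Z L ω : ℝ≥0∞) ^ 2 ∂ℙ) * (e ξ 2 * e ξ 1)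
        + ((∫⁻ ω, h ω * (Z L ω : ℝ≥0∞) ^ 2 ∂ℙ) * (e ξ 2 * e ξ 1)
        + ((∫⁻ ω, h ω * (Z L ω : ℝ≥0∞) ^ 2 ∂ℙ) * (e ξ 2 * e ξ 1)
        + (∫⁻ ω, h ω * (Z L ω : ℝ≥0∞) ^ 3 ∂ℙ) * (e ξ 1 * e ξ 1 * e ξ 1)))) := by
        rw [sumS1, sumS2, sumS3, sumS4, sumS5]

omit hindep hident hZ0 hZrec in
lemma xi_int (hcube : Integrable (fun ω => (ξ (0, 0) ω : ℝ) ^ 3) ℙ) :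
    Integrable (fun ω => (ξ (0, 0) ω : ℝ)) ℙ := by
  have hb : ∀ n : ℕ, (n : ℝ) ≤ (n : ℝ) ^ 3 + 1 := by
    intro n
    have : n ≤ n ^ 3 + 1 := by
      rcases Nat.eq_zero_or_pos n with h | h
      · simp [h]
      · exact le_trans (Nat.le_self_pow (by norm_num) n) (Nat.le_succ _)
    exact_mod_cast this
  refine Integrable.mono' (hcube.add (integrable_const 1))
    ((measurable_from_top (f := fun n : ℕ => (n : ℝ))).comp (hmeas (0, 0))).aestronglyMeasurable
    (Filter.Eventually.of_forall fun ω => ?_)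
  rw [Real.norm_of_nonneg (by positivity)]
  exact hb _

omit hindep hident hZ0 hZrec in
lemma e_one (hcube : Integrable (fun ω => (ξ (0, 0) ω : ℝ) ^ 3) ℙ)
    {μ : ℝ} (hmean : ∫ ω, (ξ (0, 0) ω : ℝ) ∂ℙ = μ) :
    e ξ 1 = ENNReal.ofReal μ := by
  have h1 : e ξ 1 = ∫⁻ ω, ENNReal.ofReal ((ξ (0, 0) ω : ℝ)) ∂ℙ := by
    refine lintegral_congr fun ω => ?_
    rw [pow_one, ENNReal.ofReal_natCast]
  rw [h1, ← ofReal_integral_eq_lintegral_ofReal (xi_int hmeas hcube)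
    (Filter.Eventually.of_forall fun ω => by positivity), hmean]

omit hindep hident hZ0 hZrec in
lemma e3_ne_top (hcube : Integrable (fun ω => (ξ (0, 0) ω : ℝ) ^ 3) ℙ) :
    e ξ 3 ≠ ∞ := by
  have h1 : e ξ 3 = ∫⁻ ω, ENNReal.ofReal ((ξ (0, 0) ω : ℝ) ^ 3) ∂ℙ := by
    refine lintegral_congr fun ω => ?_
    rw [ENNReal.ofReal_pow (by positivity), ENNReal.ofReal_natCast]
  rw [h1, ← ofReal_integral_eq_lintegral_ofReal hcube
    (Filter.Eventually.of_forall fun ω => by positivity)]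
  exact ENNReal.ofReal_ne_top

omit hindep hident hZ0 hZrec in
lemma e2_ne_top (hcube : Integrable (fun ω => (ξ (0, 0) ω : ℝ) ^ 3) ℙ) :
    e ξ 2 ≠ ∞ := by
  have hb : ∀ n : ℕ, ((n : ℝ≥0∞)) ^ 2 ≤ (n : ℝ≥0∞) ^ 3 + 1 := by
    intro n
    have : n ^ 2 ≤ n ^ 3 + 1 := by
      rcases Nat.eq_zero_or_pos n with h | h
      · simp [h]
      · exact le_trans (Nat.pow_le_pow_right h (by norm_num)) (Nat.le_succ _)
    calc ((n : ℝ≥0∞)) ^ 2 = ((n ^ 2 : ℕ) : ℝ≥0∞) := by push_cast; ring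
      _ ≤ ((n ^ 3 + 1 : ℕ) : ℝ≥0∞) := by exact_mod_cast Nat.cast_le.2 this
      _ = (n : ℝ≥0∞) ^ 3 + 1 := by push_cast; ring
  have h2 : e ξ 2 ≤ e ξ 3 + 1 := by
    calc e ξ 2 ≤ ∫⁻ ω, ((ξ (0, 0) ω : ℝ≥0∞) ^ 3 + 1) ∂ℙ := lintegral_mono fun ω => hb _
      _ = e ξ 3 + 1 := by
        rw [lintegral_add_right _ measurable_const, lintegral_one, measure_univ]
        rfl
  exact ne_top_of_le_ne_top
    (ENNReal.add_ne_top.2 ⟨e3_ne_top hmeas hcube, ENNReal.one_ne_top⟩) h2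

end Steps

/-- solving a geometric recursion in ℝ≥0∞ -/
lemma geom_rec {u : ℕ → ℝ≥0∞} {r A B : ℝ≥0} (hr0 : 0 < r) (hr1 : r < 1)
    (h0 : u 0 ≤ (A : ℝ≥0∞))
    (hstep : ∀ k, u (k + 1) ≤ (r : ℝ≥0∞) * ((r : ℝ≥0∞) * u k) + (B : ℝ≥0∞) * (r : ℝ≥0∞) ^ k) :
    ∀ k, u k ≤ ((A + B / (r * (1 - r)) : ℝ≥0) : ℝ≥0∞) * (r : ℝ≥0∞) ^ k := by
  set C : ℝ≥0 := A + B / (r * (1 - r)) with hC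
  have key : r * C + B / r ≤ C := by
    have hr0' : (0 : ℝ) < (r : ℝ) := hr0
    have hr1' : (r : ℝ) < 1 := hr1
    have h1r : (0 : ℝ) < 1 - (r : ℝ) := by linarith
    rw [hC, ← NNReal.coe_le_coe]
    push_cast [NNReal.coe_sub hr1.le]
    have hA : (0 : ℝ) ≤ (A : ℝ) := A.2
    have hB : (0 : ℝ) ≤ (B : ℝ) := B.2
    have hD : (r : ℝ) * ((B : ℝ) / ((r : ℝ) * (1 - (r : ℝ)))) + (B : ℝ) / (r : ℝ)
        = (B : ℝ) / ((r : ℝ) * (1 - (r : ℝ))) := by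
      field_simp
      ring
    calc (r : ℝ) * ((A : ℝ) + (B : ℝ) / ((r : ℝ) * (1 - (r : ℝ)))) + (B : ℝ) / (r : ℝ)
        = (r : ℝ) * (A : ℝ) + ((r : ℝ) * ((B : ℝ) / ((r : ℝ) * (1 - (r : ℝ))))
            + (B : ℝ) / (r : ℝ)) := by ring
      _ = (r : ℝ) * (A : ℝ) + (B : ℝ) / ((r : ℝ) * (1 - (r : ℝ))) := by rw [hD]
      _ ≤ (A : ℝ) + (B : ℝ) / ((r : ℝ) * (1 - (r : ℝ))) := by nlinarith
  have hA_le : (A : ℝ≥0) ≤ C := le_self_add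
  intro k
  induction k with
  | zero => simpa using h0.trans (by exact_mod_cast ENNReal.coe_le_coe.2 hA_le)
  | succ k ih =>
    calc u (k + 1) ≤ (r : ℝ≥0∞) * ((r : ℝ≥0∞) * u k) + (B : ℝ≥0∞) * (r : ℝ≥0∞) ^ k := hstep k
      _ ≤ (r : ℝ≥0∞) * ((r : ℝ≥0∞) * ((C : ℝ≥0∞) * (r : ℝ≥0∞) ^ k))
            + (B : ℝ≥0∞) * (r : ℝ≥0∞) ^ k := by gcongr
      _ = (((r * C : ℝ≥0) : ℝ≥0∞)) * (r : ℝ≥0∞) ^ (k + 1)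
            + (((B / r : ℝ≥0) : ℝ≥0∞)) * (r : ℝ≥0∞) ^ (k + 1) := by
          push_cast
          rw [ENNReal.coe_div hr0.ne']
          congr 1
          · ring
          · rw [pow_succ, ← mul_assoc, mul_right_comm, ENNReal.div_mul_cancel
              (by exact_mod_cast hr0.ne') ENNReal.coe_ne_top]
      _ = (((r * C + B / r : ℝ≥0) : ℝ≥0∞)) * (r : ℝ≥0∞) ^ (k + 1) := by
          rw [← add_mul]; push_cast; ring_nf
      _ ≤ (C : ℝ≥0∞) * (r : ℝ≥0∞) ^ (k + 1) :=
          mul_le_mul_left (ENNReal.coe_le_coe.2 key) _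

end GW6


/-- For a subcritical Galton–Watson process with offspring mean μ ∈ (0,1) and E[ξ³] < ∞,
for l ≥ m ≥ n one has E[Zₙ Zₘ Z_l] ≤ C μ^l with C independent of n, m, l. -/
theorem stmt6
    {Ω : Type} [MeasureSpace Ω] [IsProbabilityMeasure (ℙ : Measure Ω)]
    (ξ : ℕ × ℕ → Ω → ℕ)
    (hmeas : ∀ q, Measurable (ξ q))
    (hindep : iIndepFun ξ ℙ)
    (hident : ∀ q, Measure.map (ξ q) ℙ = Measure.map (ξ (0, 0)) ℙ)
    (μ : ℝ) (hμ0 : 0 < μ) (hμ1 : μ < 1)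
    (hcube : Integrable (fun ω => (ξ (0, 0) ω : ℝ) ^ 3) ℙ)
    (hmean : ∫ ω, (ξ (0, 0) ω : ℝ) ∂ℙ = μ)
    (Z : ℕ → Ω → ℕ)
    (hZ0 : ∀ ω, Z 0 ω = 1)
    (hZrec : ∀ n ω, Z (n + 1) ω = ∑ j ∈ Finset.range (Z n ω), ξ (n, j) ω) :
    ∃ C : ℝ, ∀ n m l : ℕ, n ≤ m → m ≤ l →
        ∫ ω, (Z n ω : ℝ) * (Z m ω : ℝ) * (Z l ω : ℝ) ∂ℙ ≤ C * μ ^ l := by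
  classical
  set μ₀ : ℝ≥0 := μ.toNNReal with hμ₀def
  have hμ₀0 : 0 < μ₀ := Real.toNNReal_pos.2 hμ0
  have hμ₀1 : μ₀ < 1 := by
    rw [hμ₀def, show (1 : ℝ≥0) = (1 : ℝ).toNNReal from (Real.toNNReal_one).symm]
    exact (Real.toNNReal_lt_toNNReal_iff one_pos).2 hμ1
  have hμle : (μ₀ : ℝ≥0∞) ≤ 1 := by exact_mod_cast hμ₀1.le
  have he1 : GW6.e ξ 1 = (μ₀ : ℝ≥0∞) := by
    rw [GW6.e_one hmeas hcube hmean]; rfl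
  have ha : GW6.e ξ 2 ≠ ∞ := GW6.e2_ne_top hmeas hcube
  have hc3 : GW6.e ξ 3 ≠ ∞ := GW6.e3_ne_top hmeas hcube
  set a₀ : ℝ≥0 := (GW6.e ξ 2).toNNReal with ha₀def
  have haa : GW6.e ξ 2 = (a₀ : ℝ≥0∞) := (ENNReal.coe_toNNReal ha).symm
  set c₀ : ℝ≥0 := (GW6.e ξ 3).toNNReal with hc₀def
  have hcc : GW6.e ξ 3 = (c₀ : ℝ≥0∞) := (ENNReal.coe_toNNReal hc3).symm
  have hXGS : ∀ L k, k ≤ L →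
      Measurable[GW6.GS ξ (GW6.past L)] (fun ω => (Z k ω : ℝ≥0∞)) :=
    fun L k hk => measurable_from_top.comp (GW6.Z_meas_GS hZ0 hZrec L k hk)
  -- first moment
  have m1 : ∀ k, ∫⁻ ω, (Z k ω : ℝ≥0∞) ∂ℙ = (μ₀ : ℝ≥0∞) ^ k := by
    intro k
    induction k with
    | zero => simp [hZ0]
    | succ k ih =>
      have h := GW6.lin_step hmeas hindep hident hZ0 hZrec k
        (h := fun _ => (1 : ℝ≥0∞)) measurable_const
      simp only [one_mul] at h
      rw [h, ih, he1, pow_succ]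
  -- second moment
  set C2 : ℝ≥0 := 1 + a₀ / (μ₀ * (1 - μ₀)) with hC2def
  have m2 : ∀ k, ∫⁻ ω, ((Z k ω : ℝ≥0∞)) ^ 2 ∂ℙ ≤ (C2 : ℝ≥0∞) * (μ₀ : ℝ≥0∞) ^ k := by
    have h0 : ∫⁻ ω, ((Z 0 ω : ℝ≥0∞)) ^ 2 ∂ℙ ≤ ((1 : ℝ≥0) : ℝ≥0∞) := by simp [hZ0]
    have hstep : ∀ k, ∫⁻ ω, ((Z (k + 1) ω : ℝ≥0∞)) ^ 2 ∂ℙ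
        ≤ (μ₀ : ℝ≥0∞) * ((μ₀ : ℝ≥0∞) * ∫⁻ ω, ((Z k ω : ℝ≥0∞)) ^ 2 ∂ℙ)
          + ((a₀ : ℝ≥0) : ℝ≥0∞) * (μ₀ : ℝ≥0∞) ^ k := by
      intro k
      have h := GW6.quad_step hmeas hindep hident hZ0 hZrec k
        (h := fun _ => (1 : ℝ≥0∞)) measurable_const
      simp only [one_mul] at h
      rw [m1 k, he1, haa] at h
      calc ∫⁻ ω, ((Z (k + 1) ω : ℝ≥0∞)) ^ 2 ∂ℙ
          ≤ (μ₀ : ℝ≥0∞) ^ k * (a₀ : ℝ≥0∞)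
            + (∫⁻ ω, ((Z k ω : ℝ≥0∞)) ^ 2 ∂ℙ) * ((μ₀ : ℝ≥0∞) * (μ₀ : ℝ≥0∞)) := h
        _ = (μ₀ : ℝ≥0∞) * ((μ₀ : ℝ≥0∞) * ∫⁻ ω, ((Z k ω : ℝ≥0∞)) ^ 2 ∂ℙ)
            + (a₀ : ℝ≥0∞) * (μ₀ : ℝ≥0∞) ^ k := by ring
    have := GW6.geom_rec hμ₀0 hμ₀1 h0 hstep
    simpa [hC2def] using this
  -- third moment
  set B3 : ℝ≥0 := c₀ + 3 * (C2 * a₀) with hB3def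
  set C3 : ℝ≥0 := 1 + B3 / (μ₀ * (1 - μ₀)) with hC3def
  have m3 : ∀ k, ∫⁻ ω, ((Z k ω : ℝ≥0∞)) ^ 3 ∂ℙ ≤ (C3 : ℝ≥0∞) * (μ₀ : ℝ≥0∞) ^ k := by
    have h0 : ∫⁻ ω, ((Z 0 ω : ℝ≥0∞)) ^ 3 ∂ℙ ≤ ((1 : ℝ≥0) : ℝ≥0∞) := by simp [hZ0]
    have hstep : ∀ k, ∫⁻ ω, ((Z (k + 1) ω : ℝ≥0∞)) ^ 3 ∂ℙ
        ≤ (μ₀ : ℝ≥0∞) * ((μ₀ : ℝ≥0∞) * ∫⁻ ω, ((Z k ω : ℝ≥0∞)) ^ 3 ∂ℙ)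
          + ((B3 : ℝ≥0) : ℝ≥0∞) * (μ₀ : ℝ≥0∞) ^ k := by
      intro k
      have h := GW6.cubic_step hmeas hindep hident hZ0 hZrec k
        (h := fun _ => (1 : ℝ≥0∞)) measurable_const
      simp only [one_mul] at h
      rw [m1 k, he1, haa, hcc] at h
      calc ∫⁻ ω, ((Z (k + 1) ω : ℝ≥0∞)) ^ 3 ∂ℙ
          ≤ (μ₀ : ℝ≥0∞) ^ k * (c₀ : ℝ≥0∞)
            + ((∫⁻ ω, ((Z k ω : ℝ≥0∞)) ^ 2 ∂ℙ) * ((a₀ : ℝ≥0∞) * (μ₀ : ℝ≥0∞))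
            + ((∫⁻ ω, ((Z k ω : ℝ≥0∞)) ^ 2 ∂ℙ) * ((a₀ : ℝ≥0∞) * (μ₀ : ℝ≥0∞))
            + ((∫⁻ ω, ((Z k ω : ℝ≥0∞)) ^ 2 ∂ℙ) * ((a₀ : ℝ≥0∞) * (μ₀ : ℝ≥0∞))
            + (∫⁻ ω, ((Z k ω : ℝ≥0∞)) ^ 3 ∂ℙ)
              * ((μ₀ : ℝ≥0∞) * (μ₀ : ℝ≥0∞) * (μ₀ : ℝ≥0∞))))) := h
        _ ≤ (μ₀ : ℝ≥0∞) ^ k * (c₀ : ℝ≥0∞)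
            + (((C2 : ℝ≥0∞) * (μ₀ : ℝ≥0∞) ^ k) * ((a₀ : ℝ≥0∞) * 1)
            + (((C2 : ℝ≥0∞) * (μ₀ : ℝ≥0∞) ^ k) * ((a₀ : ℝ≥0∞) * 1)
            + (((C2 : ℝ≥0∞) * (μ₀ : ℝ≥0∞) ^ k) * ((a₀ : ℝ≥0∞) * 1)
            + (∫⁻ ω, ((Z k ω : ℝ≥0∞)) ^ 3 ∂ℙ)
              * ((μ₀ : ℝ≥0∞) * (μ₀ : ℝ≥0∞) * 1)))) := by
            gcongr <;> first | exact m2 k | exact hμle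
        _ = (μ₀ : ℝ≥0∞) * ((μ₀ : ℝ≥0∞) * ∫⁻ ω, ((Z k ω : ℝ≥0∞)) ^ 3 ∂ℙ)
            + ((c₀ : ℝ≥0∞) + 3 * ((C2 : ℝ≥0∞) * (a₀ : ℝ≥0∞))) * (μ₀ : ℝ≥0∞) ^ k := by
            ring
        _ = (μ₀ : ℝ≥0∞) * ((μ₀ : ℝ≥0∞) * ∫⁻ ω, ((Z k ω : ℝ≥0∞)) ^ 3 ∂ℙ)
            + ((B3 : ℝ≥0) : ℝ≥0∞) * (μ₀ : ℝ≥0∞) ^ k := by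
            rw [hB3def]; push_cast; ring
    have := GW6.geom_rec hμ₀0 hμ₀1 h0 hstep
    simpa [hC3def] using this
  -- the constant
  set CQ : ℝ≥0 := C3 + a₀ * C2 / (μ₀ * (1 - μ₀)) with hCQdef
  refine ⟨(CQ : ℝ), ?_⟩
  intro n m l hnm hml
  -- mixed first-order chain
  have wchain : ∀ k, ∫⁻ ω, (Z n ω : ℝ≥0∞) * (Z (n + k) ω : ℝ≥0∞) ∂ℙ
      ≤ (C2 : ℝ≥0∞) * (μ₀ : ℝ≥0∞) ^ (n + k) := by
    intro k
    induction k with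
    | zero =>
      have : ∫⁻ ω, (Z n ω : ℝ≥0∞) * (Z (n + 0) ω : ℝ≥0∞) ∂ℙ
          = ∫⁻ ω, ((Z n ω : ℝ≥0∞)) ^ 2 ∂ℙ := lintegral_congr fun ω => by
        rw [Nat.add_zero]; ring
      rw [this, Nat.add_zero]
      exact m2 n
    | succ k ih =>
      have hidx : n + (k + 1) = (n + k) + 1 := rfl
      have h := GW6.lin_step hmeas hindep hident hZ0 hZrec (n + k)
        (h := fun ω => (Z n ω : ℝ≥0∞)) (hXGS (n + k) n (Nat.le_add_right n k))
      rw [he1] at h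
      rw [hidx, h]
      calc (∫⁻ ω, (Z n ω : ℝ≥0∞) * (Z (n + k) ω : ℝ≥0∞) ∂ℙ) * (μ₀ : ℝ≥0∞)
          ≤ ((C2 : ℝ≥0∞) * (μ₀ : ℝ≥0∞) ^ (n + k)) * (μ₀ : ℝ≥0∞) :=
            mul_le_mul_left ih _
        _ = (C2 : ℝ≥0∞) * (μ₀ : ℝ≥0∞) ^ ((n + k) + 1) := by rw [pow_succ]; ring
  -- mixed second-order chain
  have qchain : ∀ k, ∫⁻ ω, (Z n ω : ℝ≥0∞) * ((Z (n + k) ω : ℝ≥0∞)) ^ 2 ∂ℙ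
      ≤ (CQ : ℝ≥0∞) * (μ₀ : ℝ≥0∞) ^ (n + k) := by
    have h0 : ∫⁻ ω, (Z n ω : ℝ≥0∞) * ((Z (n + 0) ω : ℝ≥0∞)) ^ 2 ∂ℙ
        ≤ ((C3 * μ₀ ^ n : ℝ≥0) : ℝ≥0∞) := by
      have heq : ∫⁻ ω, (Z n ω : ℝ≥0∞) * ((Z (n + 0) ω : ℝ≥0∞)) ^ 2 ∂ℙ
          = ∫⁻ ω, ((Z n ω : ℝ≥0∞)) ^ 3 ∂ℙ := lintegral_congr fun ω => by
        rw [Nat.add_zero]; ring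
      rw [heq]
      calc ∫⁻ ω, ((Z n ω : ℝ≥0∞)) ^ 3 ∂ℙ ≤ (C3 : ℝ≥0∞) * (μ₀ : ℝ≥0∞) ^ n := m3 n
        _ = ((C3 * μ₀ ^ n : ℝ≥0) : ℝ≥0∞) := by push_cast; ring
    have hstep : ∀ k, ∫⁻ ω, (Z n ω : ℝ≥0∞) * ((Z (n + (k + 1)) ω : ℝ≥0∞)) ^ 2 ∂ℙ
        ≤ (μ₀ : ℝ≥0∞) * ((μ₀ : ℝ≥0∞)
            * ∫⁻ ω, (Z n ω : ℝ≥0∞) * ((Z (n + k) ω : ℝ≥0∞)) ^ 2 ∂ℙ)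
          + ((a₀ * C2 * μ₀ ^ n : ℝ≥0) : ℝ≥0∞) * (μ₀ : ℝ≥0∞) ^ k := by
      intro k
      have hidx : n + (k + 1) = (n + k) + 1 := rfl
      have h := GW6.quad_step hmeas hindep hident hZ0 hZrec (n + k)
        (h := fun ω => (Z n ω : ℝ≥0∞)) (hXGS (n + k) n (Nat.le_add_right n k))
      rw [he1, haa] at h
      rw [hidx]
      calc ∫⁻ ω, (Z n ω : ℝ≥0∞) * ((Z ((n + k) + 1) ω : ℝ≥0∞)) ^ 2 ∂ℙ
          ≤ (∫⁻ ω, (Z n ω : ℝ≥0∞) * (Z (n + k) ω : ℝ≥0∞) ∂ℙ) * (a₀ : ℝ≥0∞)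
            + (∫⁻ ω, (Z n ω : ℝ≥0∞) * ((Z (n + k) ω : ℝ≥0∞)) ^ 2 ∂ℙ)
              * ((μ₀ : ℝ≥0∞) * (μ₀ : ℝ≥0∞)) := h
        _ ≤ ((C2 : ℝ≥0∞) * (μ₀ : ℝ≥0∞) ^ (n + k)) * (a₀ : ℝ≥0∞)
            + (∫⁻ ω, (Z n ω : ℝ≥0∞) * ((Z (n + k) ω : ℝ≥0∞)) ^ 2 ∂ℙ)
              * ((μ₀ : ℝ≥0∞) * (μ₀ : ℝ≥0∞)) := by
            gcongr
            · exact wchain k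
        _ = (μ₀ : ℝ≥0∞) * ((μ₀ : ℝ≥0∞)
              * ∫⁻ ω, (Z n ω : ℝ≥0∞) * ((Z (n + k) ω : ℝ≥0∞)) ^ 2 ∂ℙ)
            + ((a₀ * C2 * μ₀ ^ n : ℝ≥0) : ℝ≥0∞) * (μ₀ : ℝ≥0∞) ^ k := by
            push_cast
            rw [pow_add]
            ring
    have hgr := GW6.geom_rec hμ₀0 hμ₀1 h0 hstep
    intro k
    clear_value a₀ c₀ B3 C2 C3
    have hnn : (C3 * μ₀ ^ n + (a₀ * C2 * μ₀ ^ n) / (μ₀ * (1 - μ₀)) : ℝ≥0)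
        = CQ * μ₀ ^ n := by
      rw [hCQdef, add_mul, div_mul_eq_mul_div]
    calc ∫⁻ ω, (Z n ω : ℝ≥0∞) * ((Z (n + k) ω : ℝ≥0∞)) ^ 2 ∂ℙ
        ≤ ((C3 * μ₀ ^ n + (a₀ * C2 * μ₀ ^ n) / (μ₀ * (1 - μ₀)) : ℝ≥0) : ℝ≥0∞)
            * (μ₀ : ℝ≥0∞) ^ k := hgr k
      _ = (CQ : ℝ≥0∞) * (μ₀ : ℝ≥0∞) ^ (n + k) := by
          rw [hnn]; push_cast; rw [pow_add]; ring
  -- third-order chain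
  have pchain : ∀ k, ∫⁻ ω, (Z n ω : ℝ≥0∞) * (Z m ω : ℝ≥0∞) * (Z (m + k) ω : ℝ≥0∞) ∂ℙ
      ≤ (CQ : ℝ≥0∞) * (μ₀ : ℝ≥0∞) ^ (m + k) := by
    intro k
    induction k with
    | zero =>
      have hqm := qchain (m - n)
      rw [Nat.add_sub_cancel' hnm] at hqm
      have heq : ∫⁻ ω, (Z n ω : ℝ≥0∞) * (Z m ω : ℝ≥0∞) * (Z (m + 0) ω : ℝ≥0∞) ∂ℙ
          = ∫⁻ ω, (Z n ω : ℝ≥0∞) * ((Z m ω : ℝ≥0∞)) ^ 2 ∂ℙ := lintegral_congr fun ω => by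
        rw [Nat.add_zero]; ring
      rw [heq, Nat.add_zero]
      exact hqm
    | succ k ih =>
      have hidx : m + (k + 1) = (m + k) + 1 := rfl
      have h := GW6.lin_step hmeas hindep hident hZ0 hZrec (m + k)
        (h := fun ω => (Z n ω : ℝ≥0∞) * (Z m ω : ℝ≥0∞))
        ((hXGS (m + k) n (le_trans hnm (Nat.le_add_right m k))).mul
          (hXGS (m + k) m (Nat.le_add_right m k)))
      rw [he1] at h
      rw [hidx, h]
      calc (∫⁻ ω, (Z n ω : ℝ≥0∞) * (Z m ω : ℝ≥0∞) * (Z (m + k) ω : ℝ≥0∞) ∂ℙ)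
            * (μ₀ : ℝ≥0∞)
          ≤ ((CQ : ℝ≥0∞) * (μ₀ : ℝ≥0∞) ^ (m + k)) * (μ₀ : ℝ≥0∞) :=
            mul_le_mul_left ih _
        _ = (CQ : ℝ≥0∞) * (μ₀ : ℝ≥0∞) ^ ((m + k) + 1) := by rw [pow_succ]; ring
  have hl := pchain (l - m)
  rw [Nat.add_sub_cancel' hml] at hl
  -- conversion to the Bochner integral
  have hZm : ∀ k, Measurable (Z k) := GW6.Z_meas hmeas hZ0 hZrec
  have hnn : 0 ≤ᵐ[ℙ] fun ω => (Z n ω : ℝ) * (Z m ω : ℝ) * (Z l ω : ℝ) :=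
    Filter.Eventually.of_forall fun ω => by positivity
  have hsm : AEStronglyMeasurable (fun ω => (Z n ω : ℝ) * (Z m ω : ℝ) * (Z l ω : ℝ)) ℙ :=
    ((((measurable_from_top (f := fun j : ℕ => (j : ℝ))).comp (hZm n)).mul
      ((measurable_from_top (f := fun j : ℕ => (j : ℝ))).comp (hZm m))).mul
      ((measurable_from_top (f := fun j : ℕ => (j : ℝ))).comp (hZm l))).aestronglyMeasurable
  rw [integral_eq_lintegral_of_nonneg_ae hnn hsm]
  have heq : ∀ ω, ENNReal.ofReal ((Z n ω : ℝ) * (Z m ω : ℝ) * (Z l ω : ℝ))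
      = (Z n ω : ℝ≥0∞) * (Z m ω : ℝ≥0∞) * (Z l ω : ℝ≥0∞) := fun ω => by
    rw [ENNReal.ofReal_mul (by positivity), ENNReal.ofReal_mul (by positivity),
      ENNReal.ofReal_natCast, ENNReal.ofReal_natCast, ENNReal.ofReal_natCast]
  rw [lintegral_congr heq]
  have hfin : (CQ : ℝ≥0∞) * (μ₀ : ℝ≥0∞) ^ l ≠ ∞ :=
    ENNReal.mul_ne_top ENNReal.coe_ne_top (ENNReal.pow_ne_top ENNReal.coe_ne_top)
  calc (∫⁻ ω, (Z n ω : ℝ≥0∞) * (Z m ω : ℝ≥0∞) * (Z l ω : ℝ≥0∞) ∂ℙ).toReal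
      ≤ ((CQ : ℝ≥0∞) * (μ₀ : ℝ≥0∞) ^ l).toReal := ENNReal.toReal_mono hfin hl
    _ = (CQ : ℝ) * μ ^ l := by
        rw [ENNReal.toReal_mul, ENNReal.toReal_pow, ENNReal.coe_toReal, ENNReal.coe_toReal,
          hμ₀def, Real.coe_toNNReal _ hμ0.le]
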